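/- Along any solution (x, y, u, v) : I → ℝ⁴ of the first-order system ẋ = u, ẏ = v, u̇ = (1 − u² − v²) u − x, v̇ = (1 − u² − v²) v − y, the function W(t) = v(t) x(t) − u(t) y(t) satisfies Ẇ(t) = (1 − u(t)² − v(t)²) W(t) for all t ∈ I. Consequently, if W(t₁) = 0 at some t₁ ∈ I then W ≡ 0 on I; if W(t₁) > 0 then W(t) > 0 for all t ∈ I; and if W(t₁) < 0 then W(t) < 0 for all t ∈ I. -/

import Mathlib

open Set

/-- Forward Grönwall: a solution of the linear ODE `f' = a f` on `[c,d]` vanishing at `c`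
vanishes at `d`. -/
lemma linODE_zero_of_zero_left {f a : ℝ → ℝ} {c d : ℝ} (hcd : c ≤ d)
    (ha : ContinuousOn a (Icc c d))
    (hf : ∀ s ∈ Icc c d, HasDerivAt f (a s * f s) s)
    (h0 : f c = 0) : f d = 0 := by
  obtain ⟨K, hK⟩ := isCompact_Icc.exists_bound_of_continuousOn ha
  have hfc : ContinuousOn f (Icc c d) := fun s hs =>
    (hf s hs).continuousAt.continuousWithinAt
  have key := norm_le_gronwallBound_of_norm_deriv_right_le (f' := fun s => a s * f s)
    (δ := 0) (K := K) (ε := 0) hfc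
    (fun s hs => (hf s (Ico_subset_Icc_self hs)).hasDerivWithinAt)
    (by simp [h0])
    (fun s hs => by
      have := hK s (Ico_subset_Icc_self hs)
      have h1 : ‖a s * f s‖ = ‖a s‖ * ‖f s‖ := norm_mul _ _
      rw [h1, add_zero]
      exact mul_le_mul_of_nonneg_right this (norm_nonneg _))
  have := key d ⟨hcd, le_rfl⟩
  rw [gronwallBound_ε0_δ0] at this
  simpa using le_antisymm this (norm_nonneg _)

/-- Along solutions of `ẋ = u, ẏ = v, u̇ = (1-u²-v²)u - x, v̇ = (1-u²-v²)v - y`,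
the function `W = vx - uy` satisfies `Ẇ = (1-u²-v²) W`; consequently the sign of `W`
is constant along trajectories. -/
theorem W_equation_and_sign (I : Set ℝ) (hI : I.OrdConnected)
    (x y u v : ℝ → ℝ)
    (hx : ∀ t ∈ I, HasDerivAt x (u t) t)
    (hy : ∀ t ∈ I, HasDerivAt y (v t) t)
    (hu : ∀ t ∈ I, HasDerivAt u ((1 - u t ^ 2 - v t ^ 2) * u t - x t) t)
    (hv : ∀ t ∈ I, HasDerivAt v ((1 - u t ^ 2 - v t ^ 2) * v t - y t) t) :
    (∀ t ∈ I, HasDerivAt (fun s => v s * x s - u s * y s)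
        ((1 - u t ^ 2 - v t ^ 2) * (v t * x t - u t * y t)) t) ∧
    (∀ t₁ ∈ I,
      (v t₁ * x t₁ - u t₁ * y t₁ = 0 → ∀ t ∈ I, v t * x t - u t * y t = 0) ∧
      (0 < v t₁ * x t₁ - u t₁ * y t₁ → ∀ t ∈ I, 0 < v t * x t - u t * y t) ∧
      (v t₁ * x t₁ - u t₁ * y t₁ < 0 → ∀ t ∈ I, v t * x t - u t * y t < 0)) := by
  set a : ℝ → ℝ := fun s => 1 - u s ^ 2 - v s ^ 2 with ha_def
  set W : ℝ → ℝ := fun s => v s * x s - u s * y s with hW_def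
  have hW : ∀ t ∈ I, HasDerivAt W (a t * W t) t := by
    intro t ht
    have h := ((hv t ht).mul (hx t ht)).sub ((hu t ht).mul (hy t ht))
    replace h : HasDerivAt W _ t := h
    convert h using 1
    simp only [ha_def, hW_def]
    ring
  have hac : ContinuousOn a I := by
    have huc : ContinuousOn u I := fun t ht => (hu t ht).continuousAt.continuousWithinAt
    have hvc : ContinuousOn v I := fun t ht => (hv t ht).continuousAt.continuousWithinAt
    exact (continuousOn_const.sub (huc.pow 2)).sub (hvc.pow 2)
  have hWc : ContinuousOn W I := fun t ht => (hW t ht).continuousAt.continuousWithinAt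
  -- the zero-propagation lemma
  have key : ∀ t₁ ∈ I, W t₁ = 0 → ∀ t ∈ I, W t = 0 := by
    intro t₁ ht₁ h0 t ht
    rcases le_total t₁ t with h | h
    · have hsub : Icc t₁ t ⊆ I := hI.out ht₁ ht
      exact linODE_zero_of_zero_left h (hac.mono hsub)
        (fun s hs => hW s (hsub hs)) h0
    · -- time reversal
      have hsub : Icc t t₁ ⊆ I := hI.out ht ht₁
      have hmem : ∀ s ∈ Icc t t₁, t + t₁ - s ∈ Icc t t₁ := by
        intro s hs
        exact ⟨by linarith [hs.2], by linarith [hs.1]⟩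
      have hg : ∀ s ∈ Icc t t₁,
          HasDerivAt (fun s => W (t + t₁ - s))
            ((fun s => -a (t + t₁ - s)) s * (fun s => W (t + t₁ - s)) s) s := by
        intro s hs
        have hinner : HasDerivAt (fun s : ℝ => t + t₁ - s) (-1) s := by
          simpa using (hasDerivAt_id s).const_sub (t + t₁)
        have houter := hW (t + t₁ - s) (hsub (hmem s hs))
        have := houter.comp s hinner
        replace this : HasDerivAt (fun s => W (t + t₁ - s)) _ s := this
        convert this using 1
        ring
      have hgc : ContinuousOn (fun s => -a (t + t₁ - s)) (Icc t t₁) := by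
        have hcomp : ContinuousOn (fun s : ℝ => t + t₁ - s) (Icc t t₁) :=
          (continuousOn_const.sub continuousOn_id)
        exact ((hac.mono hsub).comp hcomp (fun s hs => hmem s hs)).neg
      have := linODE_zero_of_zero_left h hgc hg (by simpa using h0)
      simpa using this
  refine ⟨hW, fun t₁ ht₁ => ⟨key t₁ ht₁, ?_, ?_⟩⟩
  · intro hpos t ht
    by_contra hle
    push_neg at hle
    have hsub : uIcc t t₁ ⊆ I := hI.uIcc_subset ht ht₁
    obtain ⟨t₂, ht₂, hW₂⟩ := intermediate_value_uIcc (hWc.mono hsub)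
      (show (0:ℝ) ∈ uIcc (W t) (W t₁) from mem_uIcc.2 (Or.inl ⟨hle, le_of_lt hpos⟩))
    exact absurd (key t₂ (hsub ht₂) hW₂ t₁ ht₁) (ne_of_gt hpos)
  · intro hneg t ht
    by_contra hle
    push_neg at hle
    have hsub : uIcc t t₁ ⊆ I := hI.uIcc_subset ht ht₁
    obtain ⟨t₂, ht₂, hW₂⟩ := intermediate_value_uIcc (hWc.mono hsub)
      (show (0:ℝ) ∈ uIcc (W t) (W t₁) from mem_uIcc.2 (Or.inr ⟨le_of_lt hneg, hle⟩))
    exact absurd (key t₂ (hsub ht₂) hW₂ t₁ ht₁) (ne_of_lt hneg)
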